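/- (Invariance of the affine closure under the Dynkin automorphism) Fix n≥3. Let i_{n-1}: B(Ã_{n-1}) → B(B_n) be the homomorphism σ_i ↦ σ_i, a_n ↦ φ_nσ_{n-1}φ_n^{-1} where φ_n = tσ_1⋯σ_{n-1}, let _nI: B(B_n) → B(A_n) be the injective homomorphism σ_i ↦ σ_{i+1}, t ↦ σ_1², and let x̄_n = _nI ∘ i_{n-1}. If x, y ∈ B(Ã_{n-1}) satisfy i_{n-1}(y) = φ_n · i_{n-1}(x) · φ_n^{-1} (i.e., y is the image of x under the Dynkin automorphism), then x̄_n(y) and x̄_n(x) are conjugate in B(A_n), and hence are Markov equivalent (so the affine closures of x and y coincide). -/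

import Mathlib

/-- Relators of the `A`-type braid group `B(A n)`: generator `i : Fin n` stands for `σ_{i+1}`. -/
def braidRelsA (n : ℕ) : Set (FreeGroup (Fin n)) :=
  { r | (∃ i j : Fin n, (i : ℕ) + 2 ≤ (j : ℕ) ∧
          r = FreeGroup.of i * FreeGroup.of j * (FreeGroup.of j * FreeGroup.of i)⁻¹) ∨
        (∃ i j : Fin n, (j : ℕ) = (i : ℕ) + 1 ∧
          r = FreeGroup.of i * FreeGroup.of j * FreeGroup.of i *
              (FreeGroup.of j * FreeGroup.of i * FreeGroup.of j)⁻¹) }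

/-- The `A`-type braid group `B(A_n)` with `n` generators `σ_1, …, σ_n`. -/
abbrev BraidA (n : ℕ) : Type := PresentedGroup (braidRelsA n)

/-- Relators of the `B`-type braid group `B(B_{n+1})`: generator `some i` (`i : Fin n`)
stands for `σ_{i+1}`, and `none` stands for `t`. -/
def braidRelsB (n : ℕ) : Set (FreeGroup (Option (Fin n))) :=
  { r | (∃ i j : Fin n, (i : ℕ) + 2 ≤ (j : ℕ) ∧
          r = FreeGroup.of (some i) * FreeGroup.of (some j) *
              (FreeGroup.of (some j) * FreeGroup.of (some i))⁻¹) ∨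
        (∃ i j : Fin n, (j : ℕ) = (i : ℕ) + 1 ∧
          r = FreeGroup.of (some i) * FreeGroup.of (some j) * FreeGroup.of (some i) *
              (FreeGroup.of (some j) * FreeGroup.of (some i) * FreeGroup.of (some j))⁻¹) ∨
        (∃ i : Fin n, 1 ≤ (i : ℕ) ∧
          r = FreeGroup.of (some i) * FreeGroup.of none *
              (FreeGroup.of none * FreeGroup.of (some i))⁻¹) ∨
        (∃ i : Fin n, (i : ℕ) = 0 ∧
          r = FreeGroup.of (some i) * FreeGroup.of none * FreeGroup.of (some i) *
              FreeGroup.of none *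
              (FreeGroup.of none * FreeGroup.of (some i) * FreeGroup.of none *
                FreeGroup.of (some i))⁻¹) }

/-- The `B`-type braid group `B(B_{n+1})`, with generators `σ_1, …, σ_n` and `t`. -/
abbrev BraidB (n : ℕ) : Type := PresentedGroup (braidRelsB n)

/-- `φ_{n+1} = t σ_1 σ_2 ⋯ σ_n` in `B(B_{n+1})`. -/
noncomputable def phiB (n : ℕ) : BraidB n :=
  PresentedGroup.of none *
    ((List.finRange n).map fun i => (PresentedGroup.of (some i) : BraidB n)).prod

/-- `a_{n+1} = φ_{n+1} σ_n φ_{n+1}⁻¹` in `B(B_{n+1})`. -/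
noncomputable def aB (n : ℕ) (h : 0 < n) : BraidB n :=
  phiB n * PresentedGroup.of (some (⟨n - 1, by omega⟩ : Fin n)) * (phiB n)⁻¹

/-- Relators of the affine braid group `B(Ã_n)`: generator `some i` (`i : Fin n`)
stands for `σ_{i+1}`, and `none` stands for `a_{n+1}`. -/
def braidRelsAff (n : ℕ) : Set (FreeGroup (Option (Fin n))) :=
  { r | (∃ i j : Fin n, (i : ℕ) + 2 ≤ (j : ℕ) ∧
          r = FreeGroup.of (some i) * FreeGroup.of (some j) *
              (FreeGroup.of (some j) * FreeGroup.of (some i))⁻¹) ∨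
        (∃ i j : Fin n, (j : ℕ) = (i : ℕ) + 1 ∧
          r = FreeGroup.of (some i) * FreeGroup.of (some j) * FreeGroup.of (some i) *
              (FreeGroup.of (some j) * FreeGroup.of (some i) * FreeGroup.of (some j))⁻¹) ∨
        (∃ i : Fin n, 1 ≤ (i : ℕ) ∧ (i : ℕ) + 2 ≤ n ∧
          r = FreeGroup.of (some i) * FreeGroup.of none *
              (FreeGroup.of none * FreeGroup.of (some i))⁻¹) ∨
        (∃ i : Fin n, ((i : ℕ) = 0 ∨ (i : ℕ) + 1 = n) ∧
          r = FreeGroup.of (some i) * FreeGroup.of none * FreeGroup.of (some i) *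
              (FreeGroup.of none * FreeGroup.of (some i) * FreeGroup.of none)⁻¹) }

/-- The affine (`Ã`-type) braid group `B(Ã_n)`, with generators `σ_1, …, σ_n` and `a_{n+1}`. -/
abbrev BraidAff (n : ℕ) : Type := PresentedGroup (braidRelsAff n)

/-- One Markov move on the disjoint union `⨆ m, B(A_m)`, relative to a family `inc`
of tower inclusions `B(A_m) → B(A_{m+1})`: either replace `a * b` by `b * a` in the same
group, or replace `inc m x * σ_{m+1}` (in `B(A_{m+1})`) by `x` (in `B(A_m)`). -/
def MarkovStep (inc : ∀ m : ℕ, BraidA m →* BraidA (m + 1)) :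
    (Σ m : ℕ, BraidA m) → (Σ m : ℕ, BraidA m) → Prop := fun p q =>
  (∃ (m : ℕ) (a b : BraidA m), p = ⟨m, a * b⟩ ∧ q = ⟨m, b * a⟩) ∨
  (∃ (m : ℕ) (x : BraidA m),
      p = ⟨m + 1, inc m x * PresentedGroup.of (Fin.last m)⟩ ∧ q = ⟨m, x⟩)

/-- Markov equivalence: the equivalence relation generated by the Markov moves. -/
def MarkovEq (inc : ∀ m : ℕ, BraidA m →* BraidA (m + 1)) :
    (Σ m : ℕ, BraidA m) → (Σ m : ℕ, BraidA m) → Prop :=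
  Relation.EqvGen (MarkovStep inc)

theorem stmt_18 (n : ℕ) (hn : 3 ≤ n)
    (inc : ∀ m : ℕ, BraidA m →* BraidA (m + 1))
    (hinc : ∀ (m : ℕ) (i : Fin m),
      inc m (PresentedGroup.of i) = PresentedGroup.of i.castSucc)
    (iB : BraidAff (n - 1) →* BraidB (n - 1))
    (hiB1 : ∀ i : Fin (n - 1), iB (PresentedGroup.of (some i)) = PresentedGroup.of (some i))
    (hiB2 : iB (PresentedGroup.of none) = aB (n - 1) (by omega))
    (I : BraidB (n - 1) →* BraidA n)
    (hIinj : Function.Injective I)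
    (hI1 : ∀ i : Fin (n - 1), I (PresentedGroup.of (some i)) =
      PresentedGroup.of (⟨(i : ℕ) + 1, by have := i.isLt; omega⟩ : Fin n))
    (hI2 : I (PresentedGroup.of none) = PresentedGroup.of (⟨0, by omega⟩ : Fin n) ^ 2)
    (x y : BraidAff (n - 1))
    (h : iB y = phiB (n - 1) * iB x * (phiB (n - 1))⁻¹) :
    IsConj (I (iB x)) (I (iB y)) ∧
    MarkovEq inc ⟨n, I (iB y)⟩ ⟨n, I (iB x)⟩ := by
  set g := I (phiB (n - 1)) with hg
  have key : I (iB y) = g * I (iB x) * g⁻¹ := by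
    rw [h]; simp [map_mul, map_inv, hg]
  constructor
  · exact isConj_iff.mpr ⟨g, by rw [key]⟩
  · apply Relation.EqvGen.rel
    left
    refine ⟨n, g, I (iB x) * g⁻¹, ?_, ?_⟩
    · rw [key]; congr 1; group
    · congr 1; group
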